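/- Assume the set Tx of transactions is countable. For an ω-bounded contract, for every set of actors A, every mempool P and every reachable state s, there exists a finite subset P₀ ⊆ P such that MEV_A(s, P₀) = MEV_A(s, P). -/

import Mathlib

/-- An abstract contract over actors `Ac`, token types `Tk`, transactions `Tx` and
contract states `Γ`.  A blockchain state is a pair of a contract state and a wallet
state `Ac → Tk → ℕ`.  Wallet states of initial states, and of any state produced by the
transition function, satisfy the finite tokens axiom (finitely many nonzero entries,
i.e. finite total sum of naturals). -/
structure Contract (Ac Tk Tx Γ : Type*) where
  /-- The partial labelled transition function. -/
  step : Γ × (Ac → Tk → ℕ) → Tx → Option (Γ × (Ac → Tk → ℕ))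
  /-- The set of initial blockchain states. -/
  init : Set (Γ × (Ac → Tk → ℕ))
  initFin : ∀ s ∈ init, (Function.support fun p : Ac × Tk => s.2 p.1 p.2).Finite
  stepFin : ∀ s tx s', step s tx = some s' →
    (Function.support fun p : Ac × Tk => s'.2 p.1 p.2).Finite

namespace Contract

variable {Ac Tk Tx Γ : Type*}

/-- The induced total execution relation: process the transactions in order, applying
the partial transition function when defined (valid transaction) and leaving the state
unchanged otherwise. -/
def exec (C : Contract Ac Tk Tx Γ) :
    Γ × (Ac → Tk → ℕ) → List Tx → Γ × (Ac → Tk → ℕ)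
  | s, [] => s
  | s, tx :: X => C.exec ((C.step s tx).getD s) X

/-- A state is reachable if some initial state reaches it by some sequence. -/
def Reachable (C : Contract Ac Tk Tx Γ) (s : Γ × (Ac → Tk → ℕ)) : Prop :=
  ∃ s₀ ∈ C.init, ∃ X : List Tx, C.exec s₀ X = s

end Contract

/-- The combined wallet of a set of actors `A` in a blockchain state `s`. -/
noncomputable def wal {Ac Tk Γ : Type*} (s : Γ × (Ac → Tk → ℕ)) (A : Set Ac) : Tk → ℕ :=
  fun t => ∑ᶠ a ∈ A, s.2 a t

/-- `ω` is a wealth function: additive on finite-support wallets. -/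
def IsWealth {Tk : Type*} (ω : (Tk → ℕ) → ℕ) : Prop :=
  ∀ w₀ w₁ : Tk → ℕ, (Function.support w₀).Finite → (Function.support w₁).Finite →
    ω (w₀ + w₁) = ω w₀ + ω w₁

/-- The gain `γ_A(s, X)` of actors `A` upon performing the sequence `X` from `s`. -/
noncomputable def Contract.gain {Ac Tk Tx Γ : Type*} (C : Contract Ac Tk Tx Γ) (ω : (Tk → ℕ) → ℕ)
    (A : Set Ac) (s : Γ × (Ac → Tk → ℕ)) (X : List Tx) : ℤ :=
  (ω (wal (C.exec s X) A) : ℤ) - (ω (wal s A) : ℤ)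

/-- ω-boundedness: the total wealth of all states reachable from an initial state is
bounded by a constant depending only on that initial state. -/
def Contract.Bounded {Ac Tk Tx Γ : Type*} (C : Contract Ac Tk Tx Γ)
    (ω : (Tk → ℕ) → ℕ) : Prop :=
  ∀ s₀ ∈ C.init, ∃ n : ℕ, ∀ X : List Tx, ω (wal (C.exec s₀ X) Set.univ) < n

/-- A transaction deducibility function `Λ`, mapping a set of actors and a set of
transactions to the set of transactions they can deduce, satisfying the axioms of
Definition "Transaction deducibility axioms". -/
structure Deducibility (Ac Tx : Type*) where
  L : Set Ac → Set Tx → Set Tx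
  extensive : ∀ (A : Set Ac) (T : Set Tx), T ⊆ L A T
  idem : ∀ (A : Set Ac) (T : Set Tx), L A (L A T) = L A T
  mono : ∀ ⦃A A' : Set Ac⦄ ⦃T T' : Set Tx⦄, A ⊆ A' → T ⊆ T' → L A T ⊆ L A' T'
  cont : ∀ (A : Set Ac) (Ti : ℕ → Set Tx), Monotone Ti →
    L A (⋃ i, Ti i) = ⋃ i, L A (Ti i)
  finCauses : ∀ T : Set Tx, T.Finite → ∃ A : Set Ac, A.Finite ∧ T ⊆ L A ∅
  privKnow : ∀ A A' : Set Ac, L A ∅ ⊆ L A' ∅ → A ⊆ A'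
  noShared : ∀ (A B : Set Ac) (T : Set Tx), L A T ∩ L B T ⊆ L (A ∩ B) T

/-- `X` is a finite sequence over the set `K` of transactions. -/
def SeqOver {Tx : Type*} (K : Set Tx) (X : List Tx) : Prop := ∀ tx ∈ X, tx ∈ K

/-- The set of gains obtainable by `A` in `s` by firing sequences deducible from their
private knowledge only; the unrealized gain `u_A(s)` is its greatest element. -/
def ugainSet {Ac Tk Tx Γ : Type*} (C : Contract Ac Tk Tx Γ) (ω : (Tk → ℕ) → ℕ)
    (D : Deducibility Ac Tx) (A : Set Ac) (s : Γ × (Ac → Tk → ℕ)) : Set ℤ :=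
  {g : ℤ | ∃ X : List Tx, SeqOver (D.L A ∅) X ∧ g = C.gain ω A s X}

/-- The set of external gains obtainable by `A` in `(s, P)` (`u` being the unrealized
gain `u_A(s)`); `MEV_A(s, P)` is its greatest element. -/
def mevSet {Ac Tk Tx Γ : Type*} (C : Contract Ac Tk Tx Γ) (ω : (Tk → ℕ) → ℕ)
    (D : Deducibility Ac Tx) (A : Set Ac) (s : Γ × (Ac → Tk → ℕ)) (P : Set Tx)
    (u : ℤ) : Set ℤ :=
  {g : ℤ | ∃ X : List Tx, SeqOver (D.L A P) X ∧ g = C.gain ω A s X - u}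

/-- (with `Tx` countable) for an ω-bounded contract, for every set of
actors `A`, mempool `P` and reachable state `s`, there is a finite subset `P₀ ⊆ P`
such that `MEV_A(s, P₀) = MEV_A(s, P)`. -/
theorem mev_finite_mempool
    {Ac Tk Tx Γ : Type*} [Countable Ac] [Infinite Ac] [Countable Tx]
    (C : Contract Ac Tk Tx Γ) (ω : (Tk → ℕ) → ℕ) (hω : IsWealth ω)
    (hb : C.Bounded ω) (D : Deducibility Ac Tx)
    (A : Set Ac) (P : Set Tx) (s : Γ × (Ac → Tk → ℕ)) (hs : C.Reachable s) :
    ∃ P₀ : Set Tx, P₀ ⊆ P ∧ P₀.Finite ∧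
      ∀ u m₀ m : ℤ,
        IsGreatest (ugainSet C ω D A s) u →
        IsGreatest (mevSet C ω D A s P₀ u) m₀ →
        IsGreatest (mevSet C ω D A s P u) m →
        m₀ = m := by
  classical
  -- the set of plain gains over a knowledge set
  set GS : Set Tx → Set ℤ := fun Q =>
    {g : ℤ | ∃ X : List Tx, SeqOver (D.L A Q) X ∧ g = C.gain ω A s X} with hGSdef
  have hmev : ∀ (Q : Set Tx) (u m : ℤ),
      IsGreatest (mevSet C ω D A s Q u) m ↔ IsGreatest (GS Q) (m + u) := by
    intro Q u m
    constructor
    · rintro ⟨⟨X, hX, hg⟩, hub⟩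
      refine ⟨⟨X, hX, by omega⟩, ?_⟩
      rintro g ⟨Y, hY, rfl⟩
      have := hub ⟨Y, hY, rfl⟩
      omega
    · rintro ⟨⟨X, hX, hg⟩, hub⟩
      refine ⟨⟨X, hX, by omega⟩, ?_⟩
      rintro g ⟨Y, hY, rfl⟩
      have := hub ⟨Y, hY, rfl⟩
      omega
  by_cases hG : ∃ G, IsGreatest (GS P) G
  · obtain ⟨G, ⟨X, hX, hGX⟩, hub⟩ := hG
    by_cases hPe : P = ∅
    · refine ⟨P, subset_rfl, by simp [hPe], ?_⟩
      intro u m₀ m _ hm₀ hm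
      exact hm₀.unique hm
    · -- P nonempty countable: enumerate it
      obtain ⟨f, hf⟩ := (Set.to_countable P).exists_eq_range
        (Set.nonempty_iff_ne_empty.2 hPe)
      set T : ℕ → Set Tx := fun i => f '' Set.Iic i with hTdef
      have hTmono : Monotone T := fun i j hij =>
        Set.image_mono (Set.Iic_subset_Iic.2 hij)
      have hTU : (⋃ i, T i) = P := by
        rw [hf]
        ext x
        simp only [Set.mem_iUnion, hTdef, Set.mem_image, Set.mem_Iic, Set.mem_range]
        constructor
        · rintro ⟨i, j, _, rfl⟩; exact ⟨j, rfl⟩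
        · rintro ⟨j, rfl⟩; exact ⟨j, j, le_rfl, rfl⟩
      have hcont : D.L A P = ⋃ i, D.L A (T i) := by
        rw [← hTU]; exact D.cont A T hTmono
      -- find a level containing all transactions of X
      have hlev : ∃ n, SeqOver (D.L A (T n)) X := by
        clear hGX
        induction X with
        | nil => exact ⟨0, fun tx h => absurd h List.not_mem_nil⟩
        | cons tx X ih =>
          obtain ⟨n, hn⟩ := ih (fun t ht => hX t (List.mem_cons_of_mem _ ht))
          have htx : tx ∈ D.L A P := hX tx List.mem_cons_self
          rw [hcont] at htx
          obtain ⟨i, hi⟩ := Set.mem_iUnion.1 htx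
          refine ⟨max n i, ?_⟩
          intro t ht
          rcases List.mem_cons.1 ht with rfl | ht
          · exact D.mono subset_rfl (hTmono (le_max_right n i)) hi
          · exact D.mono subset_rfl (hTmono (le_max_left n i)) (hn t ht)
      obtain ⟨n, hn⟩ := hlev
      have hTP : T n ⊆ P := by
        rw [← hTU]; exact Set.subset_iUnion T n
      refine ⟨T n, hTP, (Set.finite_Iic n).image f, ?_⟩
      intro u m₀ m _ hm₀ hm
      rw [hmev] at hm₀ hm
      have hmG : m + u = G := hm.unique ⟨⟨X, hX, hGX⟩, hub⟩
      -- G is attained in GS (T n)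
      have hGmem : G ∈ GS (T n) := ⟨X, hn, hGX⟩
      have h1 : G ≤ m₀ + u := hm₀.2 hGmem
      have h2 : m₀ + u ≤ G := by
        have : m₀ + u ∈ GS P := by
          obtain ⟨Y, hY, hgY⟩ := hm₀.1
          exact ⟨Y, fun t ht => D.mono subset_rfl hTP (hY t ht), hgY⟩
        exact hub this
      omega
  · refine ⟨∅, Set.empty_subset P, Set.finite_empty, ?_⟩
    intro u m₀ m _ _ hm
    exact absurd ⟨m + u, (hmev P u m).1 hm⟩ hG
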